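/- arXiv:1512.01110 — 2 statements merged into one kernel-verified Lean document; each statement's English description precedes it below -/
import Mathlib

section
/- Let m, n be positive integers, r = min(m,n), let L be any function from the real m×n matrices to ℝ, and let λ ≥ 0. Then the infimum over all real m×n matrices Z of L(Z) + λ‖Z‖_* equals the infimum, over all tuples (d, α, β) with d ∈ ℝ^r, d_k ≥ 0, α_k ∈ ℝ^m, ‖α_k‖₂ ≤ 1, β_k ∈ ℝ^n, ‖β_k‖₂ ≤ 1 for all k ∈ {1,…,r}, of L(Σ_{k=1}^r d_k α_k β_kᵀ) + λ·Σ_{k=1}^r d_k. (Generalization of Theorem 1 to an arbitrary loss, Remark 2.) -/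
open scoped BigOperators

/-- The nuclear norm of a real matrix: the sum of the square roots of the
eigenvalues of `Zᵀ * Z` (i.e. the sum of the singular values of `Z`). -/
noncomputable def nuclearNorm {m n : ℕ} (Z : Matrix (Fin m) (Fin n) ℝ) : ℝ :=
  ∑ j, Real.sqrt ((show (Z.transpose * Z).IsHermitian by
    simpa using Matrix.isHermitian_conjTranspose_mul_self Z).eigenvalues j)

/-- The Euclidean (ℓ²) norm of a vector in `ℝ^m`. -/
noncomputable def l2norm {m : ℕ} (x : Fin m → ℝ) : ℝ := Real.sqrt (∑ i, x i ^ 2)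

/-- `∑ k, d k • (α k) (β k)ᵀ`, a sum of scaled rank-one matrices. -/
noncomputable def rankOneSum {m n r : ℕ} (d : Fin r → ℝ) (α : Fin r → Fin m → ℝ)
    (β : Fin r → Fin n → ℝ) : Matrix (Fin m) (Fin n) ℝ :=
  ∑ k, d k • Matrix.vecMulVec (α k) (β k)

open Matrix

namespace SVDAux
variable {m n : ℕ}

noncomputable def lam (W : Matrix (Fin m) (Fin n) ℝ) (j : Fin n) : ℝ :=
  (Matrix.isHermitian_conjTranspose_mul_self W).eigenvalues j

noncomputable def V (W : Matrix (Fin m) (Fin n) ℝ) (j : Fin n) : Fin n → ℝ :=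
  ⇑((Matrix.isHermitian_conjTranspose_mul_self W).eigenvectorBasis j)

noncomputable def U (W : Matrix (Fin m) (Fin n) ℝ) (j : Fin n) : Fin m → ℝ :=
  if lam W j = 0 then 0 else (Real.sqrt (lam W j))⁻¹ • (W *ᵥ V W j)

lemma lam_nonneg (W : Matrix (Fin m) (Fin n) ℝ) (j : Fin n) : 0 ≤ lam W j :=
  Matrix.eigenvalues_conjTranspose_mul_self_nonneg W j

lemma v_orthonormal (W : Matrix (Fin m) (Fin n) ℝ) (j k : Fin n) :
    V W j ⬝ᵥ V W k = if j = k then 1 else 0 := by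
  have h := (Matrix.isHermitian_conjTranspose_mul_self W).eigenvectorBasis.orthonormal
  rw [orthonormal_iff_ite] at h
  have h2 := h j k
  simpa [PiLp.inner_apply, dotProduct, V, mul_comm] using h2

lemma mulVec_V (W : Matrix (Fin m) (Fin n) ℝ) (j : Fin n) :
    (Wᴴ * W) *ᵥ V W j = lam W j • V W j :=
  (Matrix.isHermitian_conjTranspose_mul_self W).mulVec_eigenvectorBasis j

lemma key1 (W : Matrix (Fin m) (Fin n) ℝ) (j k : Fin n) :
    (W *ᵥ V W j) ⬝ᵥ (W *ᵥ V W k) = if j = k then lam W j else 0 := by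
  have h1 : (W *ᵥ V W j) ⬝ᵥ (W *ᵥ V W k) = ((Wᴴ * W) *ᵥ V W j) ⬝ᵥ V W k := by
    rw [Matrix.dotProduct_mulVec, ← Matrix.mulVec_transpose, Matrix.mulVec_mulVec,
      Matrix.conjTranspose_eq_transpose_of_trivial]
  rw [h1, mulVec_V, smul_dotProduct, v_orthonormal, smul_eq_mul]
  by_cases h : j = k <;> simp [h]

lemma key2 (W : Matrix (Fin m) (Fin n) ℝ) (j : Fin n) (h : lam W j = 0) :
    W *ᵥ V W j = 0 := by
  have h1 := key1 W j j
  simp [h] at h1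
  exact h1

lemma key3 (W : Matrix (Fin m) (Fin n) ℝ) (a b : Fin n) :
    ∑ j, V W j a * V W j b = if a = b then 1 else 0 := by
  have hU := (Matrix.isHermitian_conjTranspose_mul_self W).eigenvectorUnitary.2
  rw [Unitary.mem_iff] at hU
  have h2 := congrFun (congrFun hU.2 a) b
  simp only [Matrix.mul_apply, Matrix.one_apply] at h2
  rw [← h2]
  apply Finset.sum_congr rfl
  intro j _
  simp [Matrix.star_apply, V]

lemma sqrt_lam_ne (W : Matrix (Fin m) (Fin n) ℝ) (j : Fin n) (h : lam W j ≠ 0) :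
    Real.sqrt (lam W j) ≠ 0 := by
  rw [Real.sqrt_ne_zero' ]
  exact lt_of_le_of_ne (lam_nonneg W j) (Ne.symm h)

lemma uu (W : Matrix (Fin m) (Fin n) ℝ) (j k : Fin n) :
    U W j ⬝ᵥ U W k = if j = k then (if lam W j = 0 then 0 else 1) else 0 := by
  unfold U
  by_cases hj : lam W j = 0
  · simp [hj]
  by_cases hk : lam W k = 0
  · by_cases h : j = k
    · subst h; exact absurd hk hj
    · simp [hj, hk, h]
  · have h1 := key1 W j k
    simp only [hj, hk, if_false, smul_dotProduct, dotProduct_smul,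
      smul_eq_mul]
    rw [h1]
    by_cases h : j = k
    · subst h
      simp only [if_pos rfl]
      have hs := sqrt_lam_ne W j hj
      rw [← Real.mul_self_sqrt (lam_nonneg W j)]
      field_simp
      rw [Real.sqrt_sq (Real.sqrt_nonneg _)]; simp
    · simp [h]

lemma u_zero (W : Matrix (Fin m) (Fin n) ℝ) (j : Fin n) (h : lam W j = 0) :
    U W j = 0 := by simp [U, h]

-- decomposition
lemma decomp (W : Matrix (Fin m) (Fin n) ℝ) :
    rankOneSum (fun j => Real.sqrt (lam W j)) (U W) (V W) = W := by
  have step : ∀ j, Real.sqrt (lam W j) • Matrix.vecMulVec (U W j) (V W j)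
      = Matrix.vecMulVec (W *ᵥ V W j) (V W j) := by
    intro j
    by_cases h : lam W j = 0
    · ext i l
      simp [u_zero W j h, key2 W j h, Matrix.vecMulVec_apply]
    · unfold U
      rw [if_neg h]
      ext i l
      simp only [Matrix.smul_apply, Matrix.vecMulVec_apply, Pi.smul_apply, smul_eq_mul]
      have := sqrt_lam_ne W j h
      field_simp
  unfold rankOneSum
  rw [Finset.sum_congr rfl (fun j _ => step j)]
  ext i l
  simp only [Matrix.sum_apply, Matrix.vecMulVec_apply, Matrix.mulVec, dotProduct]
  calc ∑ j, (∑ a, W i a * V W j a) * V W j l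
      = ∑ j, ∑ a, W i a * (V W j a * V W j l) := by
        apply Finset.sum_congr rfl; intro j _
        rw [Finset.sum_mul]
        apply Finset.sum_congr rfl; intro a _; ring
    _ = ∑ a, ∑ j, W i a * (V W j a * V W j l) := Finset.sum_comm
    _ = ∑ a, W i a * ∑ j, V W j a * V W j l := by
        apply Finset.sum_congr rfl; intro a _
        rw [Finset.mul_sum]
    _ = W i l := by
        simp only [key3]
        simp

lemma norm_v (W : Matrix (Fin m) (Fin n) ℝ) (j : Fin n) : l2norm (V W j) ≤ 1 := by
  unfold l2norm
  have h := v_orthonormal W j j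
  rw [if_pos rfl] at h
  have h2 : ∑ i, V W j i ^ 2 = 1 := by
    rw [← h]; unfold dotProduct; apply Finset.sum_congr rfl; intros; ring
  rw [h2, Real.sqrt_one]

lemma norm_u (W : Matrix (Fin m) (Fin n) ℝ) (j : Fin n) : l2norm (U W j) ≤ 1 := by
  unfold l2norm
  have h := uu W j j
  rw [if_pos rfl] at h
  have hs : ∑ i, U W j i ^ 2 = U W j ⬝ᵥ U W j := by
    unfold dotProduct; apply Finset.sum_congr rfl; intros; ring
  rw [hs, h]
  by_cases hl : lam W j = 0 <;> simp [hl]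

lemma sum_sq_le_one {k : ℕ} (x : Fin k → ℝ) (h : l2norm x ≤ 1) : ∑ i, x i ^ 2 ≤ 1 := by
  unfold l2norm at h
  nlinarith [Real.sq_sqrt (Finset.sum_nonneg (fun i (_ : i ∈ Finset.univ) => sq_nonneg (x i))),
    Real.sqrt_nonneg (∑ i, x i ^ 2)]

lemma bessel (W : Matrix (Fin m) (Fin n) ℝ) (α : Fin m → ℝ) :
    ∑ j, (U W j ⬝ᵥ α) ^ 2 ≤ ∑ i, α i ^ 2 := by
  set c : Fin n → ℝ := fun j => U W j ⬝ᵥ α with hc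
  have hczero : ∀ j, lam W j = 0 → c j = 0 := by
    intro j h; simp [hc, u_zero W j h]
  have h1 : ∑ i, α i * (∑ j, c j * U W j i) = ∑ j, c j ^ 2 := by
    calc ∑ i, α i * (∑ j, c j * U W j i)
        = ∑ i, ∑ j, c j * (U W j i * α i) := by
          apply Finset.sum_congr rfl; intro i _
          rw [Finset.mul_sum]; apply Finset.sum_congr rfl; intros; ring
      _ = ∑ j, ∑ i, c j * (U W j i * α i) := Finset.sum_comm
      _ = ∑ j, c j ^ 2 := by
          apply Finset.sum_congr rfl; intro j _
          rw [← Finset.mul_sum]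
          have : ∑ i, U W j i * α i = c j := rfl
          rw [this]; ring
  have h2 : ∑ i, (∑ j, c j * U W j i) ^ 2 = ∑ j, c j ^ 2 := by
    calc ∑ i, (∑ j, c j * U W j i) ^ 2
        = ∑ i, ∑ j, ∑ k, (c j * c k) * (U W j i * U W k i) := by
          apply Finset.sum_congr rfl; intro i _
          rw [sq, Finset.sum_mul_sum]
          apply Finset.sum_congr rfl; intro j _
          apply Finset.sum_congr rfl; intro k _; ring
      _ = ∑ j, ∑ k, (c j * c k) * (U W j ⬝ᵥ U W k) := by
          rw [Finset.sum_comm]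
          apply Finset.sum_congr rfl; intro j _
          rw [Finset.sum_comm]
          apply Finset.sum_congr rfl; intro k _
          rw [← Finset.mul_sum]; rfl
      _ = ∑ j, c j ^ 2 := by
          apply Finset.sum_congr rfl; intro j _
          rw [Finset.sum_eq_single j]
          · rw [uu]
            simp only [if_pos rfl]
            by_cases h : lam W j = 0
            · simp [h, hczero j h]
            · simp [h]; ring
          · intro k _ hk
            rw [uu, if_neg (Ne.symm hk), mul_zero]
          · intro h; exact absurd (Finset.mem_univ j) h
  have h3 : 0 ≤ ∑ i, (α i - ∑ j, c j * U W j i) ^ 2 :=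
    Finset.sum_nonneg (fun i _ => sq_nonneg _)
  have h4 : ∑ i, (α i - ∑ j, c j * U W j i) ^ 2
      = ∑ i, α i ^ 2 - 2 * (∑ i, α i * (∑ j, c j * U W j i))
        + ∑ i, (∑ j, c j * U W j i) ^ 2 := by
    rw [Finset.mul_sum, ← Finset.sum_sub_distrib, ← Finset.sum_add_distrib]
    apply Finset.sum_congr rfl; intros; ring
  rw [h4, h1, h2] at h3
  linarith

lemma sum_dot_v_sq (W : Matrix (Fin m) (Fin n) ℝ) (β : Fin n → ℝ) :
    ∑ j, (β ⬝ᵥ V W j) ^ 2 = ∑ i, β i ^ 2 := by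
  calc ∑ j, (β ⬝ᵥ V W j) ^ 2
      = ∑ j, ∑ a, ∑ b, (β a * β b) * (V W j a * V W j b) := by
        apply Finset.sum_congr rfl; intro j _
        rw [sq]
        unfold dotProduct
        rw [Finset.sum_mul_sum]
        apply Finset.sum_congr rfl; intro a _
        apply Finset.sum_congr rfl; intro b _; ring
    _ = ∑ a, ∑ b, (β a * β b) * ∑ j, V W j a * V W j b := by
        rw [Finset.sum_comm]
        apply Finset.sum_congr rfl; intro a _
        rw [Finset.sum_comm]
        apply Finset.sum_congr rfl; intro b _
        rw [← Finset.mul_sum]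
    _ = ∑ a, β a ^ 2 := by
        apply Finset.sum_congr rfl; intro a _
        rw [Finset.sum_eq_single a]
        · rw [key3, if_pos rfl]; ring
        · intro b _ hb; rw [key3, if_neg (Ne.symm hb), mul_zero]
        · intro h; exact absurd (Finset.mem_univ a) h

lemma nn_eq (W : Matrix (Fin m) (Fin n) ℝ) :
    nuclearNorm W = ∑ j, Real.sqrt (lam W j) := rfl

lemma rankOneSum_mulVec {s : ℕ} (d : Fin s → ℝ) (α : Fin s → Fin m → ℝ)
    (β : Fin s → Fin n → ℝ) (x : Fin n → ℝ) :
    rankOneSum d α β *ᵥ x = fun i => ∑ k, d k * (β k ⬝ᵥ x) * α k i := by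
  funext i
  unfold rankOneSum
  simp only [Matrix.mulVec, dotProduct, Matrix.sum_apply, Matrix.smul_apply,
    Matrix.vecMulVec_apply, smul_eq_mul]
  calc ∑ a, (∑ k, d k * (α k i * β k a)) * x a
      = ∑ a, ∑ k, d k * (β k a * x a) * α k i := by
        apply Finset.sum_congr rfl; intro a _
        rw [Finset.sum_mul]; apply Finset.sum_congr rfl; intros; ring
    _ = ∑ k, ∑ a, d k * (β k a * x a) * α k i := Finset.sum_comm
    _ = ∑ k, d k * (∑ a, β k a * x a) * α k i := by
        apply Finset.sum_congr rfl; intro k _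
        rw [Finset.mul_sum, Finset.sum_mul]

/-- Direction B: nuclear norm of a rank-one sum is at most the sum of coefficients. -/
lemma nuclear_le {s : ℕ} (d : Fin s → ℝ) (α : Fin s → Fin m → ℝ) (β : Fin s → Fin n → ℝ)
    (hd : ∀ k, 0 ≤ d k) (hα : ∀ k, l2norm (α k) ≤ 1) (hβ : ∀ k, l2norm (β k) ≤ 1) :
    nuclearNorm (rankOneSum d α β) ≤ ∑ k, d k := by
  set W := rankOneSum d α β with hW
  -- step 1 : nuclearNorm W = ∑ j, U W j ⬝ᵥ (W *ᵥ V W j)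
  have step1 : nuclearNorm W = ∑ j, U W j ⬝ᵥ (W *ᵥ V W j) := by
    rw [nn_eq]
    apply Finset.sum_congr rfl; intro j _
    by_cases h : lam W j = 0
    · simp [h, u_zero W j h]
    · unfold U
      rw [if_neg h, smul_dotProduct, key1, if_pos rfl, smul_eq_mul]
      rw [← Real.mul_self_sqrt (lam_nonneg W j)]
      field_simp
      rw [Real.sqrt_sq (Real.sqrt_nonneg _), sq, mul_self_div_self]
  -- step 2 : expand W
  have step2 : ∀ j, U W j ⬝ᵥ (W *ᵥ V W j) = ∑ k, d k * ((U W j ⬝ᵥ α k) * (β k ⬝ᵥ V W j)) := by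
    intro j
    have hWv : W *ᵥ V W j = fun i => ∑ k, d k * (β k ⬝ᵥ V W j) * α k i :=
      rankOneSum_mulVec d α β (V W j)
    rw [hWv]
    unfold dotProduct
    calc ∑ i, U W j i * ∑ k, d k * (β k ⬝ᵥ V W j) * α k i
        = ∑ i, ∑ k, d k * ((U W j i * α k i) * (β k ⬝ᵥ V W j)) := by
          apply Finset.sum_congr rfl; intro i _
          rw [Finset.mul_sum]
          apply Finset.sum_congr rfl; intro k _; ring
      _ = ∑ k, ∑ i, d k * ((U W j i * α k i) * (β k ⬝ᵥ V W j)) := Finset.sum_comm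
      _ = ∑ k, d k * ((U W j ⬝ᵥ α k) * (β k ⬝ᵥ V W j)) := by
          apply Finset.sum_congr rfl; intro k _
          rw [← Finset.mul_sum]
          congr 1
          rw [← Finset.sum_mul]
          rfl
  rw [step1, Finset.sum_congr rfl (fun j _ => step2 j), Finset.sum_comm]
  apply Finset.sum_le_sum
  intro k _
  have hcs : ∑ j, d k * ((U W j ⬝ᵥ α k) * (β k ⬝ᵥ V W j))
      = d k * ∑ j, (U W j ⬝ᵥ α k) * (β k ⬝ᵥ V W j) := by rw [Finset.mul_sum]
  rw [hcs]
  have hb1 : ∑ j, (U W j ⬝ᵥ α k) ^ 2 ≤ 1 :=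
    le_trans (bessel W (α k)) (sum_sq_le_one _ (hα k))
  have hb2 : ∑ j, (β k ⬝ᵥ V W j) ^ 2 ≤ 1 := by
    rw [sum_dot_v_sq]
    exact sum_sq_le_one _ (hβ k)
  have hcs2 : (∑ j, (U W j ⬝ᵥ α k) * (β k ⬝ᵥ V W j)) ^ 2
      ≤ (∑ j, (U W j ⬝ᵥ α k) ^ 2) * ∑ j, (β k ⬝ᵥ V W j) ^ 2 := by
    have := Finset.sum_mul_sq_le_sq_mul_sq Finset.univ
      (fun j => U W j ⬝ᵥ α k) (fun j => β k ⬝ᵥ V W j)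
    simpa [sq] using this
  have hle : ∑ j, (U W j ⬝ᵥ α k) * (β k ⬝ᵥ V W j) ≤ 1 := by
    nlinarith [Finset.sum_nonneg (fun j (_ : j ∈ Finset.univ) => sq_nonneg (U W j ⬝ᵥ α k)),
      Finset.sum_nonneg (fun j (_ : j ∈ Finset.univ) => sq_nonneg (β k ⬝ᵥ V W j))]
  calc d k * ∑ j, (U W j ⬝ᵥ α k) * (β k ⬝ᵥ V W j) ≤ d k * 1 :=
        mul_le_mul_of_nonneg_left hle (hd k)
    _ = d k := mul_one _

lemma exists_decomp (W : Matrix (Fin m) (Fin n) ℝ) :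
    ∃ (d : Fin n → ℝ) (α : Fin n → Fin m → ℝ) (β : Fin n → Fin n → ℝ),
      (∀ k, 0 ≤ d k) ∧ (∀ k, l2norm (α k) ≤ 1) ∧ (∀ k, l2norm (β k) ≤ 1) ∧
      rankOneSum d α β = W ∧ ∑ k, d k = nuclearNorm W :=
  ⟨fun j => Real.sqrt (lam W j), U W, V W, fun j => Real.sqrt_nonneg _,
    norm_u W, norm_v W, decomp W, (nn_eq W).symm⟩

lemma rankOneSum_transpose {s : ℕ} (d : Fin s → ℝ) (α : Fin s → Fin m → ℝ)
    (β : Fin s → Fin n → ℝ) : (rankOneSum d α β)ᵀ = rankOneSum d β α := by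
  ext l i
  unfold rankOneSum
  simp only [Matrix.transpose_apply, Matrix.sum_apply, Matrix.smul_apply,
    Matrix.vecMulVec_apply, smul_eq_mul]
  apply Finset.sum_congr rfl; intros; ring

lemma nn_transpose_le (Z : Matrix (Fin m) (Fin n) ℝ) :
    nuclearNorm Zᵀ ≤ nuclearNorm Z := by
  obtain ⟨d, α, β, hd, hα, hβ, hdec, hsum⟩ := exists_decomp Z
  have h : Zᵀ = rankOneSum d β α := by rw [← hdec, rankOneSum_transpose]
  rw [h, ← hsum]
  exact nuclear_le d β α hd hβ hα

lemma nn_transpose (Z : Matrix (Fin m) (Fin n) ℝ) :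
    nuclearNorm Zᵀ = nuclearNorm Z := by
  refine le_antisymm (nn_transpose_le Z) ?_
  have := nn_transpose_le Zᵀ
  rwa [Matrix.transpose_transpose] at this

end SVDAux

theorem relaxed_spectral_regularization_general_loss
    (m n : ℕ) (hm : 0 < m) (hn : 0 < n) (r : ℕ) (hr : r = min m n)
    (L : Matrix (Fin m) (Fin n) ℝ → ℝ) (lam : ℝ) (hlam : 0 ≤ lam) :
    sInf {v : ℝ | ∃ Z : Matrix (Fin m) (Fin n) ℝ, v = L Z + lam * nuclearNorm Z}
    = sInf {v : ℝ | ∃ (d : Fin r → ℝ) (α : Fin r → Fin m → ℝ) (β : Fin r → Fin n → ℝ),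
        (∀ k, 0 ≤ d k) ∧ (∀ k, l2norm (α k) ≤ 1) ∧ (∀ k, l2norm (β k) ≤ 1) ∧
        v = L (rankOneSum d α β) + lam * ∑ k, d k} := by
  set S1 := {v : ℝ | ∃ Z : Matrix (Fin m) (Fin n) ℝ, v = L Z + lam * nuclearNorm Z} with hS1
  set S2 := {v : ℝ | ∃ (d : Fin r → ℝ) (α : Fin r → Fin m → ℝ) (β : Fin r → Fin n → ℝ),
        (∀ k, 0 ≤ d k) ∧ (∀ k, l2norm (α k) ≤ 1) ∧ (∀ k, l2norm (β k) ≤ 1) ∧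
        v = L (rankOneSum d α β) + lam * ∑ k, d k} with hS2
  have hA' : ∀ Z : Matrix (Fin m) (Fin n) ℝ,
      ∃ (d : Fin r → ℝ) (α : Fin r → Fin m → ℝ) (β : Fin r → Fin n → ℝ),
      (∀ k, 0 ≤ d k) ∧ (∀ k, l2norm (α k) ≤ 1) ∧ (∀ k, l2norm (β k) ≤ 1) ∧
      rankOneSum d α β = Z ∧ ∑ k, d k = nuclearNorm Z := by
    intro Z
    rcases le_total n m with h | h
    · have hrn : r = n := by omega
      subst hrn
      exact SVDAux.exists_decomp Z
    · have hrm : r = m := by omega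
      subst hrm
      obtain ⟨d, α, β, hd, hα, hβ, hdec, hsum⟩ := SVDAux.exists_decomp Zᵀ
      refine ⟨d, β, α, hd, hβ, hα, ?_, ?_⟩
      · rw [← Matrix.transpose_transpose Z, ← hdec, SVDAux.rankOneSum_transpose]
      · rw [hsum, SVDAux.nn_transpose]
  have hS1ne : S1.Nonempty := ⟨L 0 + lam * nuclearNorm 0, 0, rfl⟩
  have hsub : S1 ⊆ S2 := by
    rintro x ⟨Z, rfl⟩
    obtain ⟨d, α, β, hd, hα, hβ, hdec, hsum⟩ := hA' Z
    exact ⟨d, α, β, hd, hα, hβ, by rw [hdec, hsum]⟩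
  have hS2ne : S2.Nonempty := ⟨hS1ne.choose, hsub hS1ne.choose_spec⟩
  have hdom : ∀ y ∈ S2, ∃ x ∈ S1, x ≤ y := by
    rintro y ⟨d, α, β, hd, hα, hβ, rfl⟩
    refine ⟨L (rankOneSum d α β) + lam * nuclearNorm (rankOneSum d α β), ⟨_, rfl⟩, ?_⟩
    have h := SVDAux.nuclear_le d α β hd hα hβ
    have := mul_le_mul_of_nonneg_left h hlam
    linarith
  apply le_antisymm
  · by_cases hb : BddBelow S1
    · refine le_csInf hS2ne fun y hy => ?_
      obtain ⟨x, hx, hxy⟩ := hdom y hy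
      exact (csInf_le hb hx).trans hxy
    · have hb2 : ¬ BddBelow S2 := fun h2 => hb (h2.mono hsub)
      rw [csInf_of_not_bddBelow hb, csInf_of_not_bddBelow hb2]
  · by_cases hb : BddBelow S1
    · obtain ⟨b, hbb⟩ := hb
      have hb2 : BddBelow S2 := ⟨b, fun y hy => by
        obtain ⟨x, hx, hxy⟩ := hdom y hy
        exact (hbb hx).trans hxy⟩
      exact csInf_le_csInf hb2 hS1ne hsub
    · have hb2 : ¬ BddBelow S2 := fun h2 => hb (h2.mono hsub)
      rw [csInf_of_not_bddBelow hb, csInf_of_not_bddBelow hb2]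
end

section
/- Let m, n be positive integers, r = min(m,n), and let Z be a real m×n matrix. Then ‖Z‖_* equals the minimum of Σ_{k=1}^r d_k over all tuples (d, α, β) with d ∈ ℝ^r, d_k ≥ 0, α_k ∈ ℝ^m, ‖α_k‖₂ ≤ 1, β_k ∈ ℝ^n, ‖β_k‖₂ ≤ 1 for all k, such that Z = Σ_{k=1}^r d_k α_k β_kᵀ, and this minimum is attained (in particular it is attained by a singular value decomposition of Z). (Variational characterization of the nuclear norm underlying relaxed spectral regularization.) -/
open scoped BigOperators

namespace NNaux

open Matrix

variable {m n : ℕ} (Z : Matrix (Fin m) (Fin n) ℝ)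

lemma hermT : (Zᵀ * Z).IsHermitian := by
  simpa using Matrix.isHermitian_conjTranspose_mul_self Z

/-- eigenvalues of `Zᴴ Z` -/
noncomputable def eig (j : Fin n) : ℝ :=
  (NNaux.hermT Z).eigenvalues j

/-- singular values of `Z` -/
noncomputable def sv (j : Fin n) : ℝ := Real.sqrt (eig Z j)

/-- right singular vectors of `Z` -/
noncomputable def rv (j : Fin n) : Fin n → ℝ :=
  ⇑((NNaux.hermT Z).eigenvectorBasis j)

/-- left singular vectors of `Z` -/
noncomputable def lv (j : Fin n) : Fin m → ℝ :=
  if sv Z j = 0 then 0 else (sv Z j)⁻¹ • (Z *ᵥ rv Z j)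

lemma eig_nonneg (j : Fin n) : 0 ≤ eig Z j :=
  Matrix.eigenvalues_conjTranspose_mul_self_nonneg Z j

lemma sv_nonneg (j : Fin n) : 0 ≤ sv Z j := Real.sqrt_nonneg _

lemma sq_sv (j : Fin n) : sv Z j ^ 2 = eig Z j := Real.sq_sqrt (eig_nonneg Z j)

lemma eig_eq_zero {j : Fin n} (h : sv Z j = 0) : eig Z j = 0 := by
  have := sq_sv Z j; rw [h] at this; simpa using this.symm

lemma rv_dot (i j : Fin n) : rv Z i ⬝ᵥ rv Z j = if i = j then 1 else 0 := by
  have h := (NNaux.hermT Z).eigenvectorBasis.orthonormal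
  rw [orthonormal_iff_ite] at h
  have h2 := h i j
  simpa [PiLp.inner_apply, RCLike.inner_apply, starRingEnd_apply, dotProduct, rv, mul_comm] using h2

lemma A_mulVec (j : Fin n) : (Zᵀ * Z) *ᵥ rv Z j = eig Z j • rv Z j := by
  unfold rv eig
  exact (NNaux.hermT Z).mulVec_eigenvectorBasis j

lemma Zr_dot (i j : Fin n) :
    (Z *ᵥ rv Z i) ⬝ᵥ (Z *ᵥ rv Z j) = eig Z i * (if i = j then 1 else 0) := by
  calc (Z *ᵥ rv Z i) ⬝ᵥ (Z *ᵥ rv Z j)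
      = ((Z *ᵥ rv Z i) ᵥ* Z) ⬝ᵥ rv Z j := Matrix.dotProduct_mulVec _ Z _
    _ = ((Zᵀ * Z) *ᵥ rv Z i) ⬝ᵥ rv Z j := by
        rw [← Matrix.mulVec_transpose, Matrix.mulVec_mulVec]
    _ = (eig Z i • rv Z i) ⬝ᵥ rv Z j := by rw [A_mulVec]
    _ = eig Z i * (rv Z i ⬝ᵥ rv Z j) := smul_dotProduct _ _ _
    _ = eig Z i * (if i = j then 1 else 0) := by rw [rv_dot]

lemma lv_dot (i j : Fin n) :
    lv Z i ⬝ᵥ lv Z j = if i = j ∧ sv Z i ≠ 0 then 1 else 0 := by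
  unfold lv
  by_cases hi : sv Z i = 0
  · simp [hi]
  · by_cases hj : sv Z j = 0
    · have hij : i ≠ j := by rintro rfl; exact hi hj
      simp [hi, hj, hij]
    · rw [if_neg hi, if_neg hj, smul_dotProduct, dotProduct_smul, Zr_dot]
      rcases eq_or_ne i j with rfl | hij
      · rw [if_pos rfl, if_pos ⟨rfl, hi⟩]
        have h2 : sv Z i * sv Z i = eig Z i := by
          have := sq_sv Z i; nlinarith [this]
        simp only [smul_eq_mul]
        field_simp
        nlinarith [h2]
      · simp [hij]

lemma Zr_eq (j : Fin n) : Z *ᵥ rv Z j = sv Z j • lv Z j := by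
  by_cases h : sv Z j = 0
  · have h0 : (Z *ᵥ rv Z j) ⬝ᵥ (Z *ᵥ rv Z j) = 0 := by
      rw [Zr_dot, eig_eq_zero Z h]; ring
    have := dotProduct_self_eq_zero.mp h0
    simp [h, this]
  · rw [lv, if_neg h, smul_smul, mul_inv_cancel₀ h, one_smul]

lemma completeness :
    ∑ j, Matrix.vecMulVec (rv Z j) (rv Z j) = (1 : Matrix (Fin n) (Fin n) ℝ) := by
  classical
  set V : Matrix (Fin n) (Fin n) ℝ := fun a j => rv Z j a with hV
  have h1 : Vᵀ * V = 1 := by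
    ext i j
    have := rv_dot Z i j
    simp only [Matrix.mul_apply, Matrix.transpose_apply]
    simpa [Matrix.mul_apply, hV, Matrix.one_apply, dotProduct] using this
  have h2 : V * Vᵀ = 1 := mul_eq_one_comm.mp h1
  ext a b
  rw [← h2]
  simp only [Matrix.mul_apply, Matrix.transpose_apply]
  simp [Matrix.sum_apply, Matrix.mul_apply, Matrix.vecMulVec_apply, hV]

lemma mul_vecMulVec {x : Fin n → ℝ} {y : Fin n → ℝ} :
    Z * Matrix.vecMulVec x y = Matrix.vecMulVec (Z *ᵥ x) y := by
  ext i b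
  simp [Matrix.mul_apply, Matrix.vecMulVec_apply, Matrix.mulVec, dotProduct,
    Finset.sum_mul, mul_assoc]

lemma smul_vecMulVec (c : ℝ) (x : Fin m → ℝ) (y : Fin n → ℝ) :
    Matrix.vecMulVec (c • x) y = c • Matrix.vecMulVec x y := by
  ext i b
  simp [Matrix.vecMulVec_apply, mul_assoc]

lemma svd : Z = ∑ j, sv Z j • Matrix.vecMulVec (lv Z j) (rv Z j) := by
  conv_lhs => rw [← Matrix.mul_one Z, ← completeness Z]
  rw [Matrix.mul_sum]
  refine Finset.sum_congr rfl fun j _ => ?_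
  rw [mul_vecMulVec, Zr_eq, smul_vecMulVec]

lemma svdR : Z = rankOneSum (sv Z) (lv Z) (rv Z) := (svd Z).trans rfl

/-- the dual witness -/
noncomputable def W : Matrix (Fin m) (Fin n) ℝ :=
  ∑ j, Matrix.vecMulVec (lv Z j) (rv Z j)

lemma trace_rankOneSum (Y : Matrix (Fin m) (Fin n) ℝ) {r : ℕ} (d : Fin r → ℝ)
    (α : Fin r → Fin m → ℝ) (β : Fin r → Fin n → ℝ) :
    Matrix.trace (Yᵀ * rankOneSum d α β) = ∑ k, d k * (α k ⬝ᵥ (Y *ᵥ β k)) := by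
  rw [rankOneSum, Matrix.mul_sum, Matrix.trace_sum]
  refine Finset.sum_congr rfl fun k _ => ?_
  rw [Matrix.mul_smul, Matrix.trace_smul, smul_eq_mul]
  congr 1
  rw [Matrix.trace, dotProduct]
  simp only [Matrix.diag_apply, Matrix.mul_apply, Matrix.vecMulVec_apply,
    Matrix.transpose_apply, Matrix.mulVec, dotProduct, Finset.mul_sum]
  rw [Finset.sum_comm]
  exact Finset.sum_congr rfl fun i _ => Finset.sum_congr rfl fun j _ => by ring

lemma W_dot (a : Fin m → ℝ) (b : Fin n → ℝ) :
    a ⬝ᵥ (W Z *ᵥ b) = ∑ j, (a ⬝ᵥ lv Z j) * (rv Z j ⬝ᵥ b) := by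
  have : W Z *ᵥ b = ∑ j, (rv Z j ⬝ᵥ b) • lv Z j := by
    rw [W]
    ext i
    simp [Matrix.mulVec, dotProduct, Matrix.sum_apply, Matrix.vecMulVec_apply,
      Finset.sum_mul, Finset.mul_sum]
    rw [Finset.sum_comm]
    exact Finset.sum_congr rfl fun j _ => Finset.sum_congr rfl fun i' _ => by ring
  rw [this]
  have hlin : a ⬝ᵥ (∑ j, (rv Z j ⬝ᵥ b) • lv Z j) = ∑ j, a ⬝ᵥ ((rv Z j ⬝ᵥ b) • lv Z j) := by
    simp only [dotProduct, Finset.sum_apply, Pi.smul_apply, smul_eq_mul, Finset.mul_sum]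
    rw [Finset.sum_comm]
  rw [hlin]
  refine Finset.sum_congr rfl fun j _ => ?_
  rw [dotProduct_smul, smul_eq_mul, mul_comm]

/-- `(Mᵀ x) ⬝ (Mᵀ x) = ((M Mᵀ) x) ⬝ x` -/
lemma dot_transpose_mulVec {p q : ℕ} (M : Matrix (Fin p) (Fin q) ℝ) (x : Fin p → ℝ) :
    (Mᵀ *ᵥ x) ⬝ᵥ (Mᵀ *ᵥ x) = ((M * Mᵀ) *ᵥ x) ⬝ᵥ x := by
  rw [Matrix.dotProduct_mulVec, Matrix.vecMul_transpose, Matrix.mulVec_mulVec]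

lemma sum_sq_rv_dot (b : Fin n → ℝ) : ∑ j, (rv Z j ⬝ᵥ b) ^ 2 = b ⬝ᵥ b := by
  classical
  set V : Matrix (Fin n) (Fin n) ℝ := fun a j => rv Z j a with hV
  have h1 : Vᵀ * V = 1 := by
    ext i j
    have := rv_dot Z i j
    simp only [Matrix.mul_apply, Matrix.transpose_apply]
    simpa [Matrix.mul_apply, hV, Matrix.one_apply, dotProduct] using this
  have h2 : V * Vᵀ = 1 := mul_eq_one_comm.mp h1
  have h3 : ∀ j, rv Z j ⬝ᵥ b = (Vᵀ *ᵥ b) j := by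
    intro j; simp only [Matrix.mulVec, dotProduct, Matrix.transpose_apply]; simp [Matrix.mulVec, dotProduct, hV]
  calc ∑ j, (rv Z j ⬝ᵥ b) ^ 2 = (Vᵀ *ᵥ b) ⬝ᵥ (Vᵀ *ᵥ b) := by
        rw [dotProduct]
        exact Finset.sum_congr rfl fun j _ => by rw [← h3, sq]
    _ = ((V * Vᵀ) *ᵥ b) ⬝ᵥ b := dot_transpose_mulVec V b
    _ = b ⬝ᵥ b := by rw [h2, Matrix.one_mulVec]

lemma sum_sq_lv_dot (a : Fin m → ℝ) : ∑ j, (a ⬝ᵥ lv Z j) ^ 2 ≤ a ⬝ᵥ a := by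
  classical
  set U : Matrix (Fin m) (Fin n) ℝ := fun i j => lv Z j i with hU
  set e : Fin n → ℝ := fun j => if sv Z j = 0 then 0 else 1 with he
  have hUtU : Uᵀ * U = Matrix.diagonal e := by
    ext i j
    have := lv_dot Z i j
    rcases eq_or_ne i j with rfl | hij
    · simp only [Matrix.diagonal_apply_eq, he]
      rw [show (Uᵀ * U) i i = lv Z i ⬝ᵥ lv Z i from by
        simp only [Matrix.mul_apply, Matrix.transpose_apply]; simp [Matrix.mul_apply, hU, dotProduct], this]
      by_cases h : sv Z i = 0 <;> simp [h]
    · rw [Matrix.diagonal_apply_ne _ hij,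
        show (Uᵀ * U) i j = lv Z i ⬝ᵥ lv Z j from by
          simp only [Matrix.mul_apply, Matrix.transpose_apply]; simp [Matrix.mul_apply, hU, dotProduct], this]
      simp [hij]
  have hUe : U * Matrix.diagonal e = U := by
    ext i j
    rw [Matrix.mul_diagonal]
    by_cases h : sv Z j = 0
    · simp [he, h, hU, lv]
    · simp [he, h]
  set P : Matrix (Fin m) (Fin m) ℝ := U * Uᵀ with hP
  have hPsymm : Pᵀ = P := by
    rw [hP, Matrix.transpose_mul, Matrix.transpose_transpose]
  have hPP : P * P = P := by
    rw [hP, Matrix.mul_assoc, ← Matrix.mul_assoc Uᵀ U, hUtU, ← Matrix.mul_assoc, hUe]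
  have h3 : ∀ j, a ⬝ᵥ lv Z j = (Uᵀ *ᵥ a) j := by
    intro j; simp only [Matrix.mulVec, dotProduct, Matrix.transpose_apply]; simp [Matrix.mulVec, dotProduct, hU, mul_comm]
  have key : ∑ j, (a ⬝ᵥ lv Z j) ^ 2 = (P *ᵥ a) ⬝ᵥ a := by
    calc ∑ j, (a ⬝ᵥ lv Z j) ^ 2 = (Uᵀ *ᵥ a) ⬝ᵥ (Uᵀ *ᵥ a) := by
          rw [dotProduct]
          exact Finset.sum_congr rfl fun j _ => by rw [← h3, sq]
      _ = (P *ᵥ a) ⬝ᵥ a := dot_transpose_mulVec U a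
  rw [key]
  -- projection bound
  have hswap : ∀ x, x ᵥ* P = P *ᵥ x := fun x => by
    conv_lhs => rw [← hPsymm]
    rw [Matrix.vecMul_transpose]
  have hqq : (P *ᵥ a) ⬝ᵥ (P *ᵥ a) = (P *ᵥ a) ⬝ᵥ a := by
    conv_lhs => rw [Matrix.dotProduct_mulVec]
    rw [hswap, Matrix.mulVec_mulVec, hPP]
  have h0 : 0 ≤ (a - P *ᵥ a) ⬝ᵥ (a - P *ᵥ a) :=
    Finset.sum_nonneg fun i _ => mul_self_nonneg _
  have hcomm : a ⬝ᵥ (P *ᵥ a) = (P *ᵥ a) ⬝ᵥ a := dotProduct_comm _ _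
  have hexp : (a - P *ᵥ a) ⬝ᵥ (a - P *ᵥ a) = a ⬝ᵥ a - (P *ᵥ a) ⬝ᵥ a := by
    rw [sub_dotProduct, dotProduct_sub, dotProduct_sub, hqq, hcomm]
    ring
  linarith [hexp ▸ h0]

lemma dual_bound (a : Fin m → ℝ) (b : Fin n → ℝ) (ha : a ⬝ᵥ a ≤ 1) (hb : b ⬝ᵥ b ≤ 1) :
    a ⬝ᵥ (W Z *ᵥ b) ≤ 1 := by
  rw [W_dot]
  have hcs := Finset.sum_mul_sq_le_sq_mul_sq Finset.univ
    (fun j => a ⬝ᵥ lv Z j) (fun j => rv Z j ⬝ᵥ b)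
  have h1 : ∑ j, (a ⬝ᵥ lv Z j) ^ 2 ≤ 1 := le_trans (sum_sq_lv_dot Z a) ha
  have h2 : ∑ j, (rv Z j ⬝ᵥ b) ^ 2 ≤ 1 := le_of_le_of_eq (le_of_eq (sum_sq_rv_dot Z b)) rfl |>.trans hb
  have hp : (0:ℝ) ≤ ∑ j, (a ⬝ᵥ lv Z j) ^ 2 := Finset.sum_nonneg fun _ _ => sq_nonneg _
  have hq : (0:ℝ) ≤ ∑ j, (rv Z j ⬝ᵥ b) ^ 2 := Finset.sum_nonneg fun _ _ => sq_nonneg _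
  nlinarith [hcs, h1, h2, hp, hq]

lemma value_at_svd : Matrix.trace ((W Z)ᵀ * Z) = ∑ j, sv Z j := by
  have h := trace_rankOneSum (W Z) (sv Z) (lv Z) (rv Z)
  rw [← svdR Z] at h
  rw [h]
  refine Finset.sum_congr rfl fun j _ => ?_
  rw [W_dot]
  rw [Finset.sum_eq_single j]
  · rw [lv_dot, rv_dot, if_pos rfl, mul_one]
    by_cases h : sv Z j = 0
    · simp [h]
    · rw [if_pos ⟨rfl, h⟩, mul_one]
  · intro j' _ hj'
    rw [rv_dot, if_neg hj', mul_zero]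
  · intro h; exact absurd (Finset.mem_univ j) h

end NNaux

/-- padding a sum over `Fin c` to a sum over `Fin r` with zeros -/
lemma sum_dite_pad {M : Type*} [AddCommMonoid M] {c r : ℕ} (hcr : c ≤ r) (G : Fin c → M) :
    ∑ k : Fin r, (if h : (k : ℕ) < c then G ⟨k, h⟩ else 0) = ∑ j : Fin c, G j := by
  classical
  rw [← Finset.sum_subset (Finset.subset_univ
      ((Finset.univ : Finset (Fin c)).map (Fin.castLEEmb hcr)))]
  · rw [Finset.sum_map]
    refine Finset.sum_congr rfl fun j _ => ?_
    have hj : ((Fin.castLEEmb hcr j : Fin r) : ℕ) < c := by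
      simpa using j.isLt
    rw [dif_pos hj]
    congr 1
  · intro k _ hk
    rw [dif_neg]
    intro h
    exact hk (Finset.mem_map.2 ⟨⟨(k : ℕ), h⟩, Finset.mem_univ _, by
      ext; simp⟩)

/-- summing over the enumeration of a finset -/
lemma sum_orderEmbOfFin' {M : Type*} [AddCommMonoid M] {n : ℕ} (S : Finset (Fin n))
    (G : Fin n → M) :
    ∑ k : Fin S.card, G (S.orderEmbOfFin rfl k) = ∑ j ∈ S, G j := by
  classical
  refine Finset.sum_bij (fun k _ => S.orderEmbOfFin rfl k) (fun k _ => S.orderEmbOfFin_mem rfl k)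
    (fun k _ k' _ h => (S.orderEmbOfFin rfl).injective h) ?_ (fun _ _ => rfl)
  intro j hj
  have : j ∈ Set.range (S.orderEmbOfFin rfl) := by
    rw [Finset.range_orderEmbOfFin]; exact hj
  obtain ⟨k, hk⟩ := this
  exact ⟨k, Finset.mem_univ _, hk⟩

lemma sum_pad_filter {M : Type*} [AddCommMonoid M] {n r : ℕ} (p : Fin n → Prop)
    [DecidablePred p] (hcard : (Finset.univ.filter p).card ≤ r) (G : Fin n → M)
    (hG : ∀ j, ¬ p j → G j = 0) :
    ∑ k : Fin r, (if h : (k : ℕ) < (Finset.univ.filter p).card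
      then G ((Finset.univ.filter p).orderEmbOfFin rfl ⟨k, h⟩) else 0) = ∑ j, G j := by
  rw [sum_dite_pad hcard
    (fun x => G ((Finset.univ.filter p).orderEmbOfFin rfl x)),
    sum_orderEmbOfFin' (Finset.univ.filter p) G]
  exact Finset.sum_filter_of_ne fun j _ hne => by_contra fun hp => hne (hG j hp)

lemma l2norm_le_one_iff {p : ℕ} (x : Fin p → ℝ) :
    l2norm x ≤ 1 ↔ dotProduct x x ≤ 1 := by
  have hd : dotProduct x x = ∑ i, x i ^ 2 := by
    simp [dotProduct, sq]
  have hs : (0:ℝ) ≤ ∑ i, x i ^ 2 := Finset.sum_nonneg fun _ _ => sq_nonneg _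
  rw [l2norm, hd]
  constructor
  · intro h
    nlinarith [Real.sq_sqrt hs, Real.sqrt_nonneg (∑ i, x i ^ 2)]
  · intro h
    calc Real.sqrt (∑ i, x i ^ 2) ≤ Real.sqrt 1 := Real.sqrt_le_sqrt h
      _ = 1 := Real.sqrt_one

/-- The nuclear norm of `Z` is the attained minimum of `∑ k, d k` over all
decompositions `Z = ∑ k, d k • (α k)(β k)ᵀ` with `d k ≥ 0`, `‖α k‖₂ ≤ 1`,
`‖β k‖₂ ≤ 1`. -/
theorem nuclearNorm_eq_min_relaxed_decomposition
    (m n : ℕ) (hm : 0 < m) (hn : 0 < n) (r : ℕ) (hr : r = min m n)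
    (Z : Matrix (Fin m) (Fin n) ℝ) :
    IsLeast {s : ℝ | ∃ (d : Fin r → ℝ) (α : Fin r → Fin m → ℝ) (β : Fin r → Fin n → ℝ),
        (∀ k, 0 ≤ d k) ∧ (∀ k, l2norm (α k) ≤ 1) ∧ (∀ k, l2norm (β k) ≤ 1) ∧
        Z = rankOneSum d α β ∧ s = ∑ k, d k}
      (nuclearNorm Z) := by
  classical
  open NNaux Matrix in
  have hnn : nuclearNorm Z = ∑ j, sv Z j := rfl
  constructor
  · -- membership: SVD decomposition
    have hcard : (Finset.univ.filter (fun j : Fin n => sv Z j ≠ 0)).card ≤ r := by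
      have h1 : (Finset.univ.filter (fun j : Fin n => sv Z j ≠ 0)).card
          = Fintype.card {j // sv Z j ≠ 0} := (Fintype.card_subtype _).symm
      have h2 : Fintype.card {j // sv Z j ≠ 0} =
          Fintype.card {j // NNaux.eig Z j ≠ 0} := by
        refine Fintype.card_congr (Equiv.subtypeEquivRight fun j => not_congr ?_)
        unfold NNaux.sv
        exact Real.sqrt_eq_zero (NNaux.eig_nonneg Z j)
      have h3 : Fintype.card {j // NNaux.eig Z j ≠ 0} = (Zᴴ * Z).rank :=
        ((NNaux.hermT Z).rank_eq_card_non_zero_eigs).symm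
      have h4 : (Zᴴ * Z).rank = Z.rank := Matrix.rank_conjTranspose_mul_self Z
      have h5 : Z.rank ≤ min m n := le_min (Matrix.rank_le_height Z) (Matrix.rank_le_width Z)
      omega
    refine ⟨fun k => if h : (k : ℕ) < (Finset.univ.filter (fun j : Fin n => sv Z j ≠ 0)).card
        then sv Z ((Finset.univ.filter (fun j : Fin n => sv Z j ≠ 0)).orderEmbOfFin rfl ⟨k, h⟩)
        else 0,
      fun k => if h : (k : ℕ) < (Finset.univ.filter (fun j : Fin n => sv Z j ≠ 0)).card
        then lv Z ((Finset.univ.filter (fun j : Fin n => sv Z j ≠ 0)).orderEmbOfFin rfl ⟨k, h⟩)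
        else 0,
      fun k => if h : (k : ℕ) < (Finset.univ.filter (fun j : Fin n => sv Z j ≠ 0)).card
        then rv Z ((Finset.univ.filter (fun j : Fin n => sv Z j ≠ 0)).orderEmbOfFin rfl ⟨k, h⟩)
        else 0,
      ?_, ?_, ?_, ?_, ?_⟩
    · intro k; dsimp only; split
      · exact NNaux.sv_nonneg Z _
      · exact le_refl 0
    · intro k; dsimp only; split
      · rw [l2norm_le_one_iff, NNaux.lv_dot]
        split <;> norm_num
      · rw [l2norm_le_one_iff]
        simp
    · intro k; dsimp only; split
      · rw [l2norm_le_one_iff, NNaux.rv_dot, if_pos rfl]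
      · rw [l2norm_le_one_iff]; simp
    · -- Z = rankOneSum
      have key := sum_pad_filter (r := r) (fun j : Fin n => sv Z j ≠ 0) hcard
        (fun j => sv Z j • Matrix.vecMulVec (lv Z j) (rv Z j))
        (fun j hj => by have h0 : sv Z j = 0 := not_not.mp hj; simp [h0])
      refine ((NNaux.svd Z).trans ?_)
      rw [← key, rankOneSum]
      refine Finset.sum_congr rfl fun k _ => ?_
      by_cases h : (k : ℕ) < (Finset.univ.filter (fun j : Fin n => sv Z j ≠ 0)).card <;>
        simp [h]
    · -- sum value
      have key := sum_pad_filter (r := r) (fun j : Fin n => sv Z j ≠ 0) hcard (sv Z)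
        (fun j hj => not_not.mp hj)
      rw [hnn, ← key]
  · -- lower bound
    rintro s ⟨d, α, β, hd, hα, hβ, hZ, rfl⟩
    have hval : nuclearNorm Z = Matrix.trace ((NNaux.W Z)ᵀ * Z) := by
      rw [hnn, NNaux.value_at_svd]
    have ht := NNaux.trace_rankOneSum (NNaux.W Z) d α β
    rw [← hZ] at ht
    rw [hval, ht]
    have hk : ∀ k, d k * (α k ⬝ᵥ (NNaux.W Z *ᵥ β k)) ≤ d k := by
      intro k
      have hb := NNaux.dual_bound Z (α k) (β k)
        ((l2norm_le_one_iff _).mp (hα k)) ((l2norm_le_one_iff _).mp (hβ k))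
      calc d k * (α k ⬝ᵥ (NNaux.W Z *ᵥ β k)) ≤ d k * 1 :=
            mul_le_mul_of_nonneg_left hb (hd k)
        _ = d k := mul_one _
    exact Finset.sum_le_sum fun k _ => hk k
end
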